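/- If a shift space X over a finitely generated free group or monoid G is not a shift of finite type, then for every n ∈ ℕ there exists m > n and a forbidden m-block of X all of whose proper sub-blocks are not forbidden (i.e., each occurs in some element of X). -/

import Mathlib

/-- Reduced words over the alphabet `S` of generators and inverses (`ι` = formal inverse). -/
def Reduced {S : Type*} (ι : S → S) (l : List S) : Prop :=
  l.Chain' (fun a b => b ≠ ι a)

/-- Left multiplication of a reduced word by a letter, with cancellation. -/
def consRed {S : Type*} [DecidableEq S] (ι : S → S) (i : S) : List S → List S
  | [] => [i]
  | a :: t => if a = ι i then t else i :: a :: t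

theorem reduced_consRed {S : Type*} [DecidableEq S] (ι : S → S) (i : S) {l : List S}
    (h : Reduced ι l) : Reduced ι (consRed ι i l) := by
  cases l with
  | nil => simp [consRed, Reduced, List.Chain']
  | cons a t =>
    have h' : List.Chain' (fun a b => b ≠ ι a) (a :: t) := h
    by_cases hc : a = ι i
    · simpa [consRed, hc, Reduced, List.Chain'] using h'.tail
    · simp only [consRed, if_neg hc]
      exact List.isChain_cons_cons.mpr ⟨hc, h'⟩

/-- Multiplication of reduced words: multiply the letters of `v` onto `u` from the right. -/
def mulRed {S : Type*} [DecidableEq S] (ι : S → S) (v u : List S) : List S :=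
  v.foldr (consRed ι) u

theorem reduced_mulRed {S : Type*} [DecidableEq S] (ι : S → S) (v : List S) {u : List S}
    (h : Reduced ι u) : Reduced ι (mulRed ι v u) := by
  induction v with
  | nil => exact h
  | cons a t ih => exact reduced_consRed ι a ih

/-- The reduced words of the free group with inverse map `ι` on the alphabet `S`. -/
abbrev Word {S : Type*} (ι : S → S) := {l : List S // Reduced ι l}

/-- The length of a reduced word. -/
def wlen {S : Type*} {ι : S → S} (u : Word ι) : ℕ := u.1.length

/-- The empty word (identity element). -/
def emptyWord {S : Type*} (ι : S → S) : Word ι := ⟨[], List.isChain_nil⟩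

/-- A single-letter word. -/
def word1 {S : Type*} (ι : S → S) (i : S) : Word ι := ⟨[i], List.isChain_singleton i⟩

/-- The group product `v · u` as a reduced word. -/
def wmul {S : Type*} [DecidableEq S] {ι : S → S} (v : List S) (u : Word ι) : Word ι :=
  ⟨mulRed ι v u.1, reduced_mulRed ι v u.2⟩

/-- The product of two reduced words. -/
def wordMul {S : Type*} [DecidableEq S] {ι : S → S} (u v : Word ι) : Word ι :=
  wmul u.1 v

/-- The shift `σ_v`: `σ_v(x)(u) = x(vu)`. -/
def shiftBy {S A : Type*} [DecidableEq S] {ι : S → S} (v : List S) (x : Word ι → A) :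
    Word ι → A :=
  fun u => x (wmul v u)

/-- The metric on `𝒜^G`: `d(x,y) = inf({2^{-n} : x, y agree on all words of length < n})`. -/
noncomputable def shiftDist {S A : Type*} {ι : S → S} (x y : Word ι → A) : ℝ :=
  sInf {r | ∃ n : ℕ, (∀ u : Word ι, wlen u < n → x u = y u) ∧ r = (2 : ℝ) ^ (-(n : ℤ))}

/-- `B` (viewed as an `m`-block, i.e. only through its values on words of length `< m`)
occurs in `x`. -/
def occursIn {S A : Type*} [DecidableEq S] {ι : S → S} (x : Word ι → A) (m : ℕ)
    (B : Word ι → A) : Prop :=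
  ∃ u : Word ι, ∀ v : Word ι, wlen v < m → shiftBy u.1 x v = B v

/-- The shift space determined by a set `𝓕` of forbidden blocks (an element `(m, B)`
represents the `m`-block obtained by restricting `B` to words of length `< m`). -/
def shiftOf {S A : Type*} [DecidableEq S] (ι : S → S) (𝓕 : Set (ℕ × (Word ι → A))) :
    Set (Word ι → A) :=
  {x | ∀ p ∈ 𝓕, ¬ occursIn x p.1 p.2}

/-- A shift space: a subset of the full shift cut out by a set of forbidden blocks. -/
def IsShiftSpace {S A : Type*} [DecidableEq S] (ι : S → S) (X : Set (Word ι → A)) : Prop :=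
  ∃ 𝓕 : Set (ℕ × (Word ι → A)), X = shiftOf ι 𝓕

/-- A shift of finite type: cut out by finitely many forbidden blocks. -/
def IsSFT {S A : Type*} [DecidableEq S] (ι : S → S) (X : Set (Word ι → A)) : Prop :=
  ∃ 𝓕 : Set (ℕ × (Word ι → A)), 𝓕.Finite ∧ X = shiftOf ι 𝓕

theorem length_consRed' {S : Type*} [DecidableEq S] (ι : S → S) (i : S) (l : List S) :
    (consRed ι i l).length ≤ l.length + 1 := by
  cases l with
  | nil => simp [consRed]
  | cons a t =>
    by_cases hc : a = ι i <;> simp [consRed, hc] <;> omega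

theorem length_mulRed' {S : Type*} [DecidableEq S] (ι : S → S) (v u : List S) :
    (mulRed ι v u).length ≤ v.length + u.length := by
  induction v with
  | nil => simp [mulRed]
  | cons a t ih =>
    have h1 := length_consRed' ι a (mulRed ι t u)
    have h2 : mulRed ι (a :: t) u = consRed ι a (mulRed ι t u) := rfl
    rw [h2]
    simp only [List.length_cons]
    omega

theorem consRed_consRed' {S : Type*} [DecidableEq S] (ι : S → S) (hι : ∀ s, ι (ι s) = s)
    (i : S) {z : List S} (hz : Reduced ι z) :
    consRed ι i (consRed ι (ι i) z) = z := by
  cases z with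
  | nil => simp [consRed]
  | cons b s =>
    by_cases hb : b = ι (ι i)
    · rw [hι] at hb
      have e1 : consRed ι (ι i) (b :: s) = s := by simp [consRed, hι, hb]
      rw [e1]
      cases s with
      | nil => simp [consRed, hb]
      | cons c s' =>
        have hz' : List.Chain' (fun a b => b ≠ ι a) (b :: c :: s') := hz
        have hc : c ≠ ι b := (List.isChain_cons_cons.mp hz').1
        rw [hb] at hc
        simp [consRed, hc, hb]
    · have e1 : consRed ι (ι i) (b :: s) = ι i :: b :: s := by simp [consRed, hb]
      rw [e1]
      simp [consRed]

theorem mulRed_consRed' {S : Type*} [DecidableEq S] (ι : S → S) (hι : ∀ s, ι (ι s) = s)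
    (i : S) (l : List S) {v : List S} (hv : Reduced ι v) :
    mulRed ι (consRed ι i l) v = consRed ι i (mulRed ι l v) := by
  cases l with
  | nil => rfl
  | cons a t =>
    by_cases hc : a = ι i
    · have e : consRed ι i (a :: t) = t := by simp [consRed, hc]
      rw [e, hc]
      have e2 : mulRed ι (ι i :: t) v = consRed ι (ι i) (mulRed ι t v) := rfl
      rw [e2, consRed_consRed' ι hι i (reduced_mulRed ι t hv)]
    · have e : consRed ι i (a :: t) = i :: a :: t := by simp [consRed, hc]
      rw [e]
      rfl

theorem mulRed_assoc' {S : Type*} [DecidableEq S] (ι : S → S) (hι : ∀ s, ι (ι s) = s)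
    (w u : List S) {v : List S} (hv : Reduced ι v) :
    mulRed ι (mulRed ι w u) v = mulRed ι w (mulRed ι u v) := by
  induction w with
  | nil => rfl
  | cons a t ih =>
    have e : mulRed ι (a :: t) u = consRed ι a (mulRed ι t u) := rfl
    rw [e, mulRed_consRed' ι hι a _ hv, ih]
    rfl

theorem occursIn_congr' {S A : Type*} [DecidableEq S] {ι : S → S} {x : Word ι → A} {m : ℕ}
    {B B' : Word ι → A} (hBB : ∀ v : Word ι, wlen v < m → B v = B' v) :
    occursIn x m B ↔ occursIn x m B' := by
  constructor
  · rintro ⟨u, hu⟩; exact ⟨u, fun v hv => (hu v hv).trans (hBB v hv)⟩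
  · rintro ⟨u, hu⟩; exact ⟨u, fun v hv => (hu v hv).trans (hBB v hv).symm⟩

theorem occursIn_sub' {S A : Type*} [DecidableEq S] {ι : S → S} (hι : ∀ s, ι (ι s) = s)
    {x B : Word ι → A} {m k : ℕ} (u : Word ι) (hk : wlen u + k ≤ m)
    (hx : occursIn x m B) : occursIn x k (shiftBy u.1 B) := by
  obtain ⟨w, hw⟩ := hx
  refine ⟨wmul w.1 u, fun v hv => ?_⟩
  have hlen : wlen (wmul u.1 v) < m := by
    have h1 := length_mulRed' ι u.1 v.1
    simp only [wlen, wmul] at *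
    omega
  have h2 := hw (wmul u.1 v) hlen
  show x (wmul (mulRed ι w.1 u.1) v) = B (wmul u.1 v)
  rw [← h2]
  show x (wmul (mulRed ι w.1 u.1) v) = x (wmul w.1 (wmul u.1 v))
  congr 1
  exact Subtype.ext (mulRed_assoc' ι hι w.1 u.1 v.2)

/-- if a shift space `X` is not of finite type, then for every `n` there
is `m > n` and an `m`-block `B` that is forbidden (occurs in no element of `X`) while
every proper sub-block of `B` (the `k`-block of `B` at position `u`, with `k < m` and
`|u| + k ≤ m`) occurs in some element of `X`. -/
theorem not_sft_has_minimal_forbidden_blocks {S A : Type*} [DecidableEq S]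
    [Fintype S] [Fintype A]
    (ι : S → S) (hι : ∀ s, ι (ι s) = s) (hιne : ∀ s, ι s ≠ s)
    (X : Set (Word ι → A)) (hX : IsShiftSpace ι X) (hnot : ¬ IsSFT ι X) :
    ∀ n : ℕ, ∃ m : ℕ, n < m ∧ ∃ B : Word ι → A,
      (∀ x ∈ X, ¬ occursIn x m B) ∧
      (∀ k : ℕ, k < m → ∀ u : Word ι, wlen u + k ≤ m →
        ∃ x ∈ X, occursIn x k (shiftBy u.1 B)) := by
  intro n
  by_contra hcon
  push_neg at hcon
  -- hcon : ∀ m, n < m → ∀ B, (∀ x ∈ X, ¬occursIn x m B) →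
  --   ∃ k < m, ∃ u, wlen u + k ≤ m ∧ ∀ x ∈ X, ¬occursIn x k (shiftBy u.1 B)
  apply hnot
  cases isEmpty_or_nonempty A with
  | inl hA =>
    haveI : IsEmpty (Word ι → A) := ⟨fun f => (hA.false (f (emptyWord ι)))⟩
    refine ⟨∅, Set.finite_empty, ?_⟩
    ext x
    exact isEmptyElim x
  | inr hA =>
    obtain ⟨a₀⟩ := hA
    set Forb : ℕ → (Word ι → A) → Prop := fun k B => ∀ x ∈ X, ¬ occursIn x k B with hForb
    set 𝓕' : Set (ℕ × (Word ι → A)) :=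
      {p | p.1 ≤ n + 1 ∧ Forb p.1 p.2 ∧ ∀ v : Word ι, ¬ wlen v < p.1 → p.2 v = a₀} with h𝓕'
    have hfin : 𝓕'.Finite := by
      have hT : ({B : Word ι → A | ∀ v : Word ι, n + 1 ≤ wlen v → B v = a₀}).Finite := by
        rw [Set.finite_coe_iff.symm]
        have hW : Finite {v : Word ι // wlen v ≤ n} := by
          have hL : Finite {l : List S | l.length ≤ n} :=
            Set.finite_coe_iff.mpr (List.finite_length_le S n)
          exact Finite.of_injective
            (fun v : {v : Word ι // wlen v ≤ n} =>
              (⟨v.1.1, v.2⟩ : {l : List S | l.length ≤ n}))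
            (fun v₁ v₂ h => by
              have h' : (v₁.1.1 : List S) = v₂.1.1 := by have := congrArg Subtype.val h; exact this
              exact Subtype.ext (Subtype.ext h'))
        exact Finite.of_injective
          (fun B : {B : Word ι → A | ∀ v : Word ι, n + 1 ≤ wlen v → B v = a₀} =>
            fun v : {v : Word ι // wlen v ≤ n} => B.1 v.1)
          (by
            intro B₁ B₂ h
            have h1 := B₁.2
            have h2 := B₂.2
            simp only [Set.mem_setOf_eq] at h1 h2
            apply Subtype.ext
            funext v
            by_cases hv : wlen v ≤ n
            · exact congrFun h ⟨v, hv⟩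
            · rw [h1 v (by omega), h2 v (by omega)])
      have hsub : 𝓕' ⊆ (Set.Iic (n + 1)) ×ˢ {B : Word ι → A | ∀ v : Word ι, n + 1 ≤ wlen v → B v = a₀} := by
        rintro ⟨k, B⟩ ⟨hk, _, hnorm⟩
        exact ⟨hk, fun v hv => hnorm v (by omega)⟩
      exact ((Set.finite_Iic (n + 1)).prod hT).subset hsub
    refine ⟨𝓕', hfin, ?_⟩
    obtain ⟨𝓕₀, h𝓕₀⟩ := hX
    apply Set.eq_of_subset_of_subset
    · intro x hx p hp
      exact hp.2.1 x hx
    · intro x hx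
      by_contra hxX
      -- x ∉ X, so some block of 𝓕₀ occurs in x
      rw [h𝓕₀] at hxX
      simp only [shiftOf, Set.mem_setOf_eq, not_forall] at hxX
      obtain ⟨p, hp𝓕₀, hpx⟩ := hxX
      rw [not_not] at hpx
      have hpforb : Forb p.1 p.2 := fun y hy => by
        rw [h𝓕₀] at hy
        exact hy p hp𝓕₀
      -- strong induction: a forbidden block occurring in x yields a member of 𝓕' occurring in x
      have key : ∀ m : ℕ, ∀ B : Word ι → A, Forb m B → occursIn x m B →
          ∃ q ∈ 𝓕', occursIn x q.1 q.2 := by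
        intro m
        induction m using Nat.strong_induction_on with
        | _ m ih =>
          intro B hBforb hBx
          by_cases hm : m ≤ n + 1
          · refine ⟨(m, fun v => if wlen v < m then B v else a₀), ⟨hm, ?_, ?_⟩, ?_⟩
            · intro y hy hocc
              exact hBforb y hy ((occursIn_congr'
                (fun v hv => by simp [hv])).mpr hocc)
            · intro v hv; simp [hv]
            · exact (occursIn_congr' (fun v hv => by simp [hv])).mp hBx
          · obtain ⟨k, hkm, u, hku, hforbsub⟩ := hcon m (by omega) B hBforb
            exact ih k hkm _ hforbsub (occursIn_sub' hι u hku hBx)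
      obtain ⟨q, hq𝓕', hqx⟩ := key p.1 p.2 hpforb hpx
      exact hx q hq𝓕' hqx
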